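/- Let B be any n×n matrix over 𝔽₂ and let P be a uniformly random n×n permutation matrix. Then the expected size of the kernel of B + P is at most n + 1. -/

import Mathlib

open Finset

lemma zmod2_cases (a : ZMod 2) : a = 0 ∨ a = 1 := by revert a; decide

lemma zmod2_add_eq_zero (a b : ZMod 2) : a + b = 0 ↔ b = a := by revert a b; decide

/-- key counting lemma -/
lemma key (n k : ℕ) (x y : Fin n → ZMod 2)
    (hk : (univ.filter (fun i => x i = 1)).card = k) :
    (univ.filter (fun σ : Equiv.Perm (Fin n) => ∀ i, x (σ⁻¹ i) = y i)).card * n.choose k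
      ≤ n.factorial := by
  classical
  set A := univ.filter (fun σ : Equiv.Perm (Fin n) => ∀ i, x (σ⁻¹ i) = y i) with hA
  rcases A.eq_empty_or_nonempty with h | ⟨σ0, hσ0⟩
  · simp [h]
  · have hσ0' : ∀ i, x (σ0⁻¹ i) = y i := (mem_filter.mp hσ0).2
    -- for each s of card k, a permutation π s with x (π s i) = 1 ↔ i ∈ s
    have hexists : ∀ s : Finset (Fin n), s.card = k →
        ∃ π : Equiv.Perm (Fin n), ∀ i, (x (π i) = 1 ↔ i ∈ s) := by
      intro s hs
      have hcard : Fintype.card {i // i ∈ s} = Fintype.card {i // x i = 1} := by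
        rw [Fintype.card_coe, Fintype.card_subtype, hs, hk]
      obtain e := Fintype.equivOfCardEq hcard
      refine ⟨e.extendSubtype, fun i => ?_⟩
      by_cases hi : i ∈ s
      · simp only [hi, iff_true]
        exact e.extendSubtype_mem i hi
      · simp only [hi, iff_false]
        exact e.extendSubtype_not_mem i hi
    choose! π hπ using hexists
    have hAcard : A.card * n.choose k ≤ n.factorial := by
      have h1 : (A ×ˢ (powersetCard k (univ : Finset (Fin n)))).card = A.card * n.choose k := by
        rw [card_product, card_powersetCard, card_univ, Fintype.card_fin]
      rw [← h1]
      have h2 : ∀ p ∈ A ×ˢ (powersetCard k (univ : Finset (Fin n))),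
          (σ0⁻¹ * p.1 * π p.2) ∈ (univ : Finset (Equiv.Perm (Fin n))) := fun _ _ => mem_univ _
      have hstab : ∀ σ ∈ A, ∀ j, x ((σ0⁻¹ * σ) j) = x j := by
        intro σ hσ j
        have hσ' : ∀ i, x (σ⁻¹ i) = y i := (mem_filter.mp hσ).2
        have h3 : y (σ j) = x j := by
          have := hσ' (σ j); simpa using this.symm
        have := hσ0' (σ j)
        simpa [h3] using this
      have hx : ∀ p ∈ A ×ˢ (powersetCard k (univ : Finset (Fin n))), ∀ i,
          (x ((σ0⁻¹ * p.1 * π p.2) i) = 1 ↔ i ∈ p.2) := by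
        intro p hp i
        obtain ⟨hp1, hp2⟩ := mem_product.mp hp
        have hcard : p.2.card = k := (mem_powersetCard.mp hp2).2
        have := hstab p.1 hp1 (π p.2 i)
        simp only [Equiv.Perm.mul_apply] at this ⊢
        rw [this]
        exact hπ p.2 hcard i
      have h3 : (univ : Finset (Equiv.Perm (Fin n))).card = n.factorial := by
        rw [card_univ, Fintype.card_perm, Fintype.card_fin]
      rw [← h3]
      apply Finset.card_le_card_of_injOn (fun p => σ0⁻¹ * p.1 * π p.2) (fun p hp => h2 p (Finset.mem_coe.mp hp))
      intro p hp q hq hfq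
      simp only [Finset.mem_coe] at hp hq
      have hfq' : σ0⁻¹ * p.1 * π p.2 = σ0⁻¹ * q.1 * π q.2 := hfq
      have hs : p.2 = q.2 := by
        ext i
        rw [← hx p hp i, ← hx q hq i, hfq']
      have hp1 : p.1 = q.1 := by
        rw [hs] at hfq'
        exact mul_left_cancel (mul_right_cancel hfq')
      exact Prod.ext hp1 hs
    calc A.card * n.choose k ≤ n.factorial := hAcard

lemma count_wt (n k : ℕ) :
    (univ.filter (fun x : Fin n → ZMod 2 =>
      (univ.filter (fun i => x i = 1)).card = k)).card = n.choose k := by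
  classical
  have h := Finset.card_powersetCard k (univ : Finset (Fin n))
  rw [card_univ, Fintype.card_fin] at h
  rw [← h]
  apply Finset.card_bij' (fun x _ => univ.filter (fun i => x i = 1))
      (fun s _ => fun i => if i ∈ s then (1 : ZMod 2) else 0)
  case hi =>
    intro x hx
    rw [mem_powersetCard]
    exact ⟨subset_univ _, (mem_filter.mp hx).2⟩
  case hj =>
    intro s hs
    rw [mem_filter]
    refine ⟨mem_univ _, ?_⟩
    have : (univ.filter fun i => (if i ∈ s then (1 : ZMod 2) else 0) = 1) = s := by
      ext i
      simp only [mem_filter, mem_univ, true_and]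
      by_cases hi : i ∈ s <;> simp [hi]
    rw [this]
    exact (mem_powersetCard.mp hs).2
  case left_inv =>
    intro x hx
    funext i
    by_cases hi : x i = 1
    · simp [hi]
    · have : x i = 0 := (zmod2_cases (x i)).resolve_right hi
      simp [hi, this]
  case right_inv =>
    intro s hs
    ext i
    simp only [mem_filter, mem_univ, true_and]
    by_cases hi : i ∈ s <;> simp [hi]

lemma cond_iff (n : ℕ) (B : Matrix (Fin n) (Fin n) (ZMod 2)) (σ : Equiv.Perm (Fin n))
    (x : Fin n → ZMod 2) :
    (B + Matrix.of (fun i j => if σ j = i then (1 : ZMod 2) else 0)).mulVec x = 0 ↔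
    ∀ i, x (σ⁻¹ i) = B.mulVec x i := by
  rw [funext_iff]
  apply forall_congr'
  intro i
  rw [Matrix.add_mulVec, Pi.add_apply, Pi.zero_apply]
  have hP : (Matrix.of (fun i j => if σ j = i then (1:ZMod 2) else 0)).mulVec x i
      = x (σ⁻¹ i) := by
    simp only [Matrix.mulVec, dotProduct, Matrix.of_apply]
    rw [Finset.sum_eq_single (σ⁻¹ i)]
    · simp
    · intro j _ hj
      rw [if_neg, zero_mul]
      intro h
      exact hj (by rw [← h, Equiv.Perm.inv_def, Equiv.symm_apply_apply])
    · simp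
  rw [hP, zmod2_add_eq_zero]

lemma main_nat (n : ℕ) (B : Matrix (Fin n) (Fin n) (ZMod 2)) :
    ∑ σ : Equiv.Perm (Fin n),
        (Finset.univ.filter (fun x : Fin n → ZMod 2 =>
          (B + Matrix.of (fun i j => if σ j = i then (1 : ZMod 2) else 0)).mulVec x = 0)).card
      ≤ (n + 1) * n.factorial := by
  classical
  have h1 : ∑ σ : Equiv.Perm (Fin n),
        (Finset.univ.filter (fun x : Fin n → ZMod 2 =>
          (B + Matrix.of (fun i j => if σ j = i then (1 : ZMod 2) else 0)).mulVec x = 0)).card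
      = ∑ x : Fin n → ZMod 2, (univ.filter
          (fun σ : Equiv.Perm (Fin n) => ∀ i, x (σ⁻¹ i) = B.mulVec x i)).card := by
    simp_rw [card_filter, cond_iff]
    rw [Finset.sum_comm]
  rw [h1]
  have hmaps : ∀ x : Fin n → ZMod 2, x ∈ (univ : Finset (Fin n → ZMod 2)) →
      (univ.filter (fun i => x i = 1)).card ∈ Finset.range (n + 1) := by
    intro x _
    rw [mem_range, Nat.lt_succ_iff]
    calc (univ.filter (fun i => x i = 1)).card ≤ (univ : Finset (Fin n)).card :=
          card_filter_le _ _
      _ = n := by rw [card_univ, Fintype.card_fin]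
  rw [← Finset.sum_fiberwise_of_maps_to hmaps]
  calc ∑ k ∈ Finset.range (n + 1), ∑ x ∈ univ.filter
          (fun x : Fin n → ZMod 2 => (univ.filter (fun i => x i = 1)).card = k),
          (univ.filter (fun σ : Equiv.Perm (Fin n) => ∀ i, x (σ⁻¹ i) = B.mulVec x i)).card
      ≤ ∑ _k ∈ Finset.range (n + 1), n.factorial := by
        apply Finset.sum_le_sum
        intro k hk
        have hkn : k ≤ n := Nat.lt_succ_iff.mp (mem_range.mp hk)
        have hC : 0 < n.choose k := Nat.choose_pos hkn
        apply Nat.le_of_mul_le_mul_right _ hC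
        rw [Finset.sum_mul]
        calc ∑ x ∈ univ.filter
              (fun x : Fin n → ZMod 2 => (univ.filter (fun i => x i = 1)).card = k),
              (univ.filter (fun σ : Equiv.Perm (Fin n) =>
                ∀ i, x (σ⁻¹ i) = B.mulVec x i)).card * n.choose k
            ≤ ∑ _x ∈ univ.filter
              (fun x : Fin n → ZMod 2 => (univ.filter (fun i => x i = 1)).card = k),
              n.factorial := by
              apply Finset.sum_le_sum
              intro x hx
              exact key n k x (B.mulVec x) (mem_filter.mp hx).2
          _ = n.factorial * n.choose k := by
              rw [Finset.sum_const, smul_eq_mul, count_wt, Nat.mul_comm]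
    _ = (n + 1) * n.factorial := by rw [Finset.sum_const, card_range, smul_eq_mul]

/-- For any B ∈ 𝔽₂^{n×n} and a uniformly random permutation matrix P,
the expected size of the kernel of B + P is at most n + 1. -/
theorem stmt1 (n : ℕ) (B : Matrix (Fin n) (Fin n) (ZMod 2)) :
    (∑ σ : Equiv.Perm (Fin n),
        ((Finset.univ.filter (fun x : Fin n → ZMod 2 =>
          (B + Matrix.of (fun i j => if σ j = i then (1 : ZMod 2) else 0)).mulVec x = 0)).card : ℝ))
      / (Nat.factorial n : ℝ) ≤ n + 1 := by
  rw [div_le_iff₀ (by exact_mod_cast n.factorial_pos)]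
  have h := main_nat n B
  calc (∑ σ : Equiv.Perm (Fin n),
        ((Finset.univ.filter (fun x : Fin n → ZMod 2 =>
          (B + Matrix.of (fun i j => if σ j = i then (1 : ZMod 2) else 0)).mulVec x = 0)).card : ℝ))
      = ((∑ σ : Equiv.Perm (Fin n),
        (Finset.univ.filter (fun x : Fin n → ZMod 2 =>
          (B + Matrix.of (fun i j => if σ j = i then (1 : ZMod 2) else 0)).mulVec x = 0)).card : ℕ) : ℝ) := by
        push_cast; rfl
    _ ≤ (((n + 1) * n.factorial : ℕ) : ℝ) := by exact_mod_cast h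
    _ = (↑n + 1) * ↑n.factorial := by push_cast; ring
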